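/- The marginal value of an extra high-level advertisement grows with the horizon: Fix an initial reputation R_1 ∈ [0,1] and an integer j ≥ 0. For N ≥ j, let Π_N(j) denote the full-fill total profit over horizon N of the single-switch sequence with A_i = H for i ≤ j and A_i = L for j < i ≤ N, started from R_1. Then for all N, N' with j+1 ≤ N ≤ N', Π_{N'}(j+1) − Π_{N'}(j) ≥ Π_N(j+1) − Π_N(j). In particular, if switching from high to low advertisement one period later is at least as profitable at horizon N, it remains so at every longer horizon. -/
import Mathlib


noncomputable section

/-- Post-advertisement reputation map. -/
def frep (α R a : ℝ) : ℝ := R + (1 - R) * a ^ α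

/-- Demand function. -/
def dem (Λ q x : ℝ) : ℝ := if 0 < x then max 0 (Λ * (1 - q / x)) else 0

/-- Full-fill reputation trajectory (0-indexed periods). -/
def rep (α w Λ q : ℝ) (A : ℕ → ℝ) (R1 : ℝ) : ℕ → ℝ
  | 0 => R1
  | i + 1 =>
      let R' := frep α (rep α w Λ q A R1 i) (A i)
      if 0 < dem Λ q R' then (1 - w) * R' + w else R'

/-- Full-fill total profit over horizon `N`. -/
def profit (α w Λ q p c cA : ℝ) (A : ℕ → ℝ) (R1 : ℝ) (N : ℕ) : ℝ :=
  ∑ i ∈ Finset.range N,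
    ((p - c) * dem Λ q (frep α (rep α w Λ q A R1 i) (A i)) - cA * A i)


/-- The single-switch advertisement sequence: `H` in the first `j` periods
(0-indexed periods `0,…,j−1`), `L` afterwards. -/
def switchSeq (L H : ℝ) (j : ℕ) : ℕ → ℝ := fun i => if i < j then H else L

lemma dem_nonneg (Λ q x : ℝ) : 0 ≤ dem Λ q x := by
  unfold dem; split
  · exact le_max_left _ _
  · exact le_refl 0

lemma dem_mono {Λ q : ℝ} (hΛ : 0 ≤ Λ) (hq : 0 ≤ q) {x y : ℝ} (hx : 0 ≤ x) (hxy : x ≤ y) :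
    dem Λ q x ≤ dem Λ q y := by
  rcases lt_or_eq_of_le hx with hx' | hx'
  · have hy : 0 < y := lt_of_lt_of_le hx' hxy
    unfold dem
    rw [if_pos hx', if_pos hy]
    refine max_le_max le_rfl (mul_le_mul_of_nonneg_left (sub_le_sub_left ?_ 1) hΛ)
    exact div_le_div_of_nonneg_left hq hx' hxy
  · rw [← hx']
    unfold dem
    rw [if_neg (lt_irrefl 0)]
    exact dem_nonneg _ _ _

lemma frep_mem {α R a : ℝ} (hα : 0 < α) (hR : 0 ≤ R) (hR1 : R ≤ 1)
    (ha : 0 ≤ a) (ha1 : a ≤ 1) : 0 ≤ frep α R a ∧ frep α R a ≤ 1 := by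
  have ht0 : 0 ≤ a ^ α := Real.rpow_nonneg ha α
  have ht1 : a ^ α ≤ 1 := Real.rpow_le_one ha ha1 hα.le
  unfold frep
  constructor <;> nlinarith

lemma frep_mono {α R R' a a' : ℝ} (hα : 0 < α) (hR : 0 ≤ R) (hRR' : R ≤ R') (hR'1 : R' ≤ 1)
    (ha : 0 ≤ a) (haa' : a ≤ a') (ha'1 : a' ≤ 1) : frep α R a ≤ frep α R' a' := by
  have h1 : a ^ α ≤ a' ^ α := Real.rpow_le_rpow ha haa' hα.le
  have h0 : 0 ≤ a ^ α := Real.rpow_nonneg ha α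
  have h2 : a' ^ α ≤ 1 := Real.rpow_le_one (le_trans ha haa') ha'1 hα.le
  unfold frep
  nlinarith

lemma rep_key {α w Λ q : ℝ} (hα : 0 < α) (hΛ : 0 ≤ Λ) (hq : 0 ≤ q)
    (hw0 : 0 ≤ w) (hw1 : w ≤ 1)
    {A A' : ℕ → ℝ} (hA : ∀ i, 0 ≤ A i) (hAA' : ∀ i, A i ≤ A' i) (hA' : ∀ i, A' i ≤ 1)
    {R1 : ℝ} (hR10 : 0 ≤ R1) (hR11 : R1 ≤ 1) :
    ∀ i, 0 ≤ rep α w Λ q A R1 i ∧ rep α w Λ q A R1 i ≤ 1 ∧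
      0 ≤ rep α w Λ q A' R1 i ∧ rep α w Λ q A' R1 i ≤ 1 ∧
      rep α w Λ q A R1 i ≤ rep α w Λ q A' R1 i := by
  intro i
  induction i with
  | zero => exact ⟨hR10, hR11, hR10, hR11, le_rfl⟩
  | succ i ih =>
    obtain ⟨h0, h1, h0', h1', hle⟩ := ih
    have hSa := frep_mem hα h0 h1 (hA i) (le_trans (hAA' i) (hA' i))
    have hSb := frep_mem hα h0' h1' (le_trans (hA i) (hAA' i)) (hA' i)
    have hS : frep α (rep α w Λ q A R1 i) (A i) ≤ frep α (rep α w Λ q A' R1 i) (A' i) :=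
      frep_mono hα h0 hle h1' (hA i) (hAA' i) (hA' i)
    set S := frep α (rep α w Λ q A R1 i) (A i) with hSdef
    set S' := frep α (rep α w Λ q A' R1 i) (A' i) with hS'def
    have hstep : rep α w Λ q A R1 (i + 1) = if 0 < dem Λ q S then (1 - w) * S + w else S := rfl
    have hstep' : rep α w Λ q A' R1 (i + 1) =
        if 0 < dem Λ q S' then (1 - w) * S' + w else S' := rfl
    have hdm : dem Λ q S ≤ dem Λ q S' := dem_mono hΛ hq hSa.1 hS
    rw [hstep, hstep']
    split_ifs with hd hd' hd'
    · refine ⟨by nlinarith [hSa.1, hSa.2], by nlinarith [hSa.1, hSa.2],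
        by nlinarith [hSb.1, hSb.2], by nlinarith [hSb.1, hSb.2], by nlinarith⟩
    · exact absurd (lt_of_lt_of_le hd hdm) hd'
    · exact ⟨hSa.1, hSa.2, by nlinarith [hSb.1, hSb.2], by nlinarith [hSb.1, hSb.2],
        by nlinarith [hSb.2]⟩
    · exact ⟨hSa.1, hSa.2, hSb.1, hSb.2, hS⟩

/-- The marginal value of an extra high-level advertisement grows with the
horizon: for `j + 1 ≤ N ≤ N'`,
`Π_{N'}(j+1) − Π_{N'}(j) ≥ Π_N(j+1) − Π_N(j)`. -/
theorem marginal_value_of_high_ad_grows_with_horizon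
    (Λ c p cA m u α w L H R1 q : ℝ)
    (hΛ : 0 < Λ) (hc : 0 < c) (hcp : c < p) (hcA : 0 ≤ cA)
    (hm : 0 < m) (hu : 0 ≤ u) (hqdef : q = (u + p) / m) (hq1 : q < 1)
    (hα : 0 < α) (hw0 : 0 ≤ w) (hw1 : w ≤ 1)
    (hL0 : 0 ≤ L) (hLH : L < H) (hH1 : H ≤ 1)
    (hR10 : 0 ≤ R1) (hR11 : R1 ≤ 1)
    (j N N' : ℕ) (hjN : j + 1 ≤ N) (hNN' : N ≤ N') :
    profit α w Λ q p c cA (switchSeq L H (j + 1)) R1 N -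
        profit α w Λ q p c cA (switchSeq L H j) R1 N ≤
      profit α w Λ q p c cA (switchSeq L H (j + 1)) R1 N' -
        profit α w Λ q p c cA (switchSeq L H j) R1 N' := by
  have hq0 : 0 ≤ q := by
    have hp : 0 < p := hc.trans hcp
    rw [hqdef]; positivity
  set A := switchSeq L H j with hAdef
  set A' := switchSeq L H (j + 1) with hA'def
  have hA0 : ∀ i, 0 ≤ A i := by
    intro i; simp only [hAdef, switchSeq]; split_ifs <;> linarith
  have hAA' : ∀ i, A i ≤ A' i := by
    intro i; simp only [hAdef, hA'def, switchSeq]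
    split_ifs with h1 h2 h2 <;> first | rfl | linarith | omega
  have hA'1 : ∀ i, A' i ≤ 1 := by
    intro i; simp only [hA'def, switchSeq]; split_ifs <;> linarith
  have hrep := rep_key hα hΛ.le hq0 hw0 hw1 hA0 hAA' hA'1 hR10 hR11
  -- term functions
  set f : ℕ → ℝ := fun i =>
    (p - c) * dem Λ q (frep α (rep α w Λ q A R1 i) (A i)) - cA * A i with hfdef
  set f' : ℕ → ℝ := fun i =>
    (p - c) * dem Λ q (frep α (rep α w Λ q A' R1 i) (A' i)) - cA * A' i with hf'def
  have hsplit : ∀ g : ℕ → ℝ, ∑ i ∈ Finset.range N', g i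
      = ∑ i ∈ Finset.range N, g i + ∑ i ∈ Finset.Ico N N', g i := by
    intro g
    exact (Finset.sum_range_add_sum_Ico g hNN').symm
  have hprof : profit α w Λ q p c cA A R1 N' =
      profit α w Λ q p c cA A R1 N + ∑ i ∈ Finset.Ico N N', f i := hsplit f
  have hprof' : profit α w Λ q p c cA A' R1 N' =
      profit α w Λ q p c cA A' R1 N + ∑ i ∈ Finset.Ico N N', f' i := hsplit f'
  have hterm : ∀ i ∈ Finset.Ico N N', f i ≤ f' i := by
    intro i hi
    have hiN : N ≤ i := (Finset.mem_Ico.mp hi).1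
    have hij : ¬ i < j + 1 := by omega
    have hij' : ¬ i < j := by omega
    have hAi : A i = L := by simp [hAdef, switchSeq, hij']
    have hA'i : A' i = L := by simp [hA'def, switchSeq, hij]
    obtain ⟨h0, h1, h0', h1', hle⟩ := hrep i
    have hL1 : L ≤ 1 := by linarith
    have hfr : frep α (rep α w Λ q A R1 i) (A i) ≤ frep α (rep α w Λ q A' R1 i) (A' i) := by
      rw [hAi, hA'i]; exact frep_mono hα h0 hle h1' hL0 le_rfl hL1
    have hfr0 : 0 ≤ frep α (rep α w Λ q A R1 i) (A i) := by
      rw [hAi]; exact (frep_mem hα h0 h1 hL0 hL1).1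
    have hd : dem Λ q (frep α (rep α w Λ q A R1 i) (A i)) ≤
        dem Λ q (frep α (rep α w Λ q A' R1 i) (A' i)) := dem_mono hΛ.le hq0 hfr0 hfr
    rw [hAi, hA'i] at hd
    simp only [hfdef, hf'def, hAi, hA'i]
    have := mul_le_mul_of_nonneg_left hd (by linarith : (0:ℝ) ≤ p - c)
    linarith
  have hsum : ∑ i ∈ Finset.Ico N N', f i ≤ ∑ i ∈ Finset.Ico N N', f' i :=
    Finset.sum_le_sum hterm
  rw [hprof, hprof']
  linarith
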